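/- Let N ≥ 1, R = ℂ[x₀,…,x_N], and let I ⊆ R₂ be a ℂ-subspace of dimension m ≥ 2 with basis Q₁,…,Qₘ. Suppose that the syzygy module { (f₁,…,fₘ) ∈ Rᵐ : Σᵢ fᵢQᵢ = 0 } is generated as an R-module by elements all of whose components are homogeneous of degree 1. Then the ℂ-linear contraction map ker(μ_I) ⊗ R₁* → I, sending σ ⊗ φ to (φ ⊗ id)(σ), is surjective; equivalently, I is spanned by quadrics each of which is involved in some linear syzygy of I. (This is the conclusion of Proposition 2 in the form used to deduce Syz₂(X) = X.) -/

import Mathlib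

/-!
STATEMENT 1 (Proposition 2 of the paper, in the form used to deduce `Syz₂(X) = X`):
`R = ℂ[x₀,…,x_N]`, `I ⊆ R₂` a subspace with basis `Q₁,…,Qₘ` (`m ≥ 2`).  If the syzygy
module of the `Qᵢ` is generated by tuples of linear forms, then `I` is spanned by the
quadrics involved in linear syzygies of `I`, i.e. the contraction map
`ker(μ_I) ⊗ R₁* → I`, `σ ⊗ φ ↦ (φ ⊗ id)(σ)`, is surjective.
-/

open MvPolynomial TensorProduct

noncomputable section

/-- The degree-1 part `R₁` of `R = ℂ[x₀,…,x_N]`. -/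
abbrev R1 (N : ℕ) : Submodule ℂ (MvPolynomial (Fin (N + 1)) ℂ) :=
  homogeneousSubmodule (Fin (N + 1)) ℂ 1

/-- The multiplication map `μ_I : R₁ ⊗_ℂ I → R`, `v ⊗ Q ↦ v·Q`; its kernel is the space
of linear syzygies of `I`. -/
def mulMap (N : ℕ) (I : Submodule ℂ (MvPolynomial (Fin (N + 1)) ℂ)) :
    R1 N ⊗[ℂ] I →ₗ[ℂ] MvPolynomial (Fin (N + 1)) ℂ :=
  TensorProduct.lift
    (((LinearMap.mul ℂ (MvPolynomial (Fin (N + 1)) ℂ)).comp (R1 N).subtype).compl₂ I.subtype)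

/-- The contraction `σ̄(φ) = (φ ⊗ id)(σ)` of an element `σ ∈ R₁ ⊗_ℂ I` against a linear
functional `φ ∈ R₁*`.  A quadric `Q ∈ I` is *involved* in a linear syzygy `σ` if
`Q ∈ Im(σ̄)`. -/
def contract (N : ℕ) (I : Submodule ℂ (MvPolynomial (Fin (N + 1)) ℂ))
    (φ : Module.Dual ℂ (R1 N)) : R1 N ⊗[ℂ] I →ₗ[ℂ] I :=
  TensorProduct.lift ((LinearMap.lsmul ℂ I).comp φ)

lemma aux_sum_single_mul {ι A : Type*} [Fintype ι] [DecidableEq ι]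
    [NonAssocSemiring A] (j : ι) (x : A) (b : ι → A) :
    ∑ i, (Pi.single j x : ι → A) i * b i = x * b j := by
  rw [Finset.sum_eq_single j]
  · simp
  · intro i _ hij; simp [Pi.single_eq_of_ne hij]
  · simp

lemma aux_sum_mul_single {ι A : Type*} [Fintype ι] [DecidableEq ι]
    [NonAssocSemiring A] (j : ι) (x : A) (b : ι → A) :
    ∑ i, b i * (Pi.single j x : ι → A) i = b j * x := by
  rw [Finset.sum_eq_single j]
  · simp
  · intro i _ hij; simp [Pi.single_eq_of_ne hij]
  · simp

lemma aux_sum_single_smul {ι k M : Type*} [Fintype ι] [DecidableEq ι]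
    [Semiring k] [AddCommMonoid M] [Module k M] (j : ι) (x : k) (b : ι → M) :
    ∑ i, (Pi.single j x : ι → k) i • b i = x • b j := by
  rw [Finset.sum_eq_single j]
  · simp
  · intro i _ hij; simp [Pi.single_eq_of_ne hij]
  · simp

set_option maxHeartbeats 2000000 in
set_option synthInstance.maxHeartbeats 200000 in
theorem span_of_involved_quadrics_eq
    (N m : ℕ) (hN : 1 ≤ N) (hm : 2 ≤ m)
    (I : Submodule ℂ (MvPolynomial (Fin (N + 1)) ℂ))
    (hI : I ≤ homogeneousSubmodule (Fin (N + 1)) ℂ 2)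
    (Q : Fin m → MvPolynomial (Fin (N + 1)) ℂ)
    (hQli : LinearIndependent ℂ Q)
    (hQspan : Submodule.span ℂ (Set.range Q) = I)
    (G : Set (Fin m → MvPolynomial (Fin (N + 1)) ℂ))
    (hGsyz : ∀ g ∈ G, ∑ i, g i * Q i = 0)
    (hGhom : ∀ g ∈ G, ∀ i, (g i).IsHomogeneous 1)
    (hGgen : ∀ f : Fin m → MvPolynomial (Fin (N + 1)) ℂ,
      (∑ i, f i * Q i = 0) → f ∈ Submodule.span (MvPolynomial (Fin (N + 1)) ℂ) G) :
    Submodule.span ℂ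
      {q : MvPolynomial (Fin (N + 1)) ℂ |
        ∃ σ ∈ LinearMap.ker (mulMap N I), ∃ φ : Module.Dual ℂ (R1 N),
          ((contract N I φ σ : I) : MvPolynomial (Fin (N + 1)) ℂ) = q} = I := by
  classical
  have hQmem : ∀ i, Q i ∈ I := fun i => hQspan ▸ Submodule.subset_span ⟨i, rfl⟩
  set Q' : Fin m → I := fun i => ⟨Q i, hQmem i⟩ with hQ'
  set S := Submodule.span ℂ
      {q : MvPolynomial (Fin (N + 1)) ℂ |
        ∃ σ ∈ LinearMap.ker (mulMap N I), ∃ φ : Module.Dual ℂ (R1 N),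
          ((contract N I φ σ : I) : MvPolynomial (Fin (N + 1)) ℂ) = q} with hS
  apply le_antisymm
  · rw [Submodule.span_le]
    rintro q ⟨σ, -, φ, rfl⟩
    exact (contract N I φ σ).2
  rw [← hQspan, Submodule.span_le]
  rintro _ ⟨j, rfl⟩
  have gmem : ∀ g ∈ G, ∀ i, g i ∈ R1 N := fun g hg i =>
    (mem_homogeneousSubmodule _ _).mpr (hGhom g hg i)
  set K : Submodule ℂ (Fin m → ℂ) := Submodule.span ℂ
    {c : Fin m → ℂ | ∃ g, ∃ hg : g ∈ G, ∃ φ : Module.Dual ℂ (R1 N),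
      c = fun i => φ ⟨g i, gmem g hg i⟩} with hK
  set Φ : (Fin m → ℂ) →ₗ[ℂ] MvPolynomial (Fin (N + 1)) ℂ :=
    { toFun := fun c => ∑ i, c i • Q i
      map_add' := by intro a b; simp [add_smul, Finset.sum_add_distrib]
      map_smul' := by intro r a; simp [smul_smul, Finset.smul_sum] } with hΦ
  have hKS : K ≤ S.comap Φ := by
    rw [hK, Submodule.span_le]
    rintro _ ⟨g, hg, φ, rfl⟩
    have hσ : (∑ i, (⟨g i, gmem g hg i⟩ : R1 N) ⊗ₜ[ℂ] Q' i) ∈ LinearMap.ker (mulMap N I) := by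
      rw [LinearMap.mem_ker, map_sum]
      simpa [mulMap] using hGsyz g hg
    refine Submodule.subset_span ⟨_, hσ, φ, ?_⟩
    rw [map_sum]
    simp [contract, Φ]; rfl
  have hsingle : Pi.single j (1 : ℂ) ∈ K := by
    by_contra hnot
    obtain ⟨ψ, hψ1, hψ2⟩ := K.exists_dual_map_eq_bot_of_notMem hnot inferInstance
    have hψ2' : ∀ x ∈ K, ψ x = 0 := by
      intro x hx
      have hmem : ψ x ∈ Submodule.map ψ K := ⟨x, hx, rfl⟩
      rw [hψ2] at hmem
      simpa using hmem
    set c : Fin m → ℂ := fun i => ψ (Pi.single i 1) with hc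
    have hψval : ∀ v : Fin m → ℂ, ψ v = ∑ i, v i * c i := by
      intro v
      have hv : v = ∑ i, v i • (Pi.single i 1 : Fin m → ℂ) := by
        funext t
        rw [Finset.sum_apply]
        simp [Pi.single_apply]
      conv_lhs => rw [hv]
      rw [map_sum]
      simp [hc]
    have hcg : ∀ g, ∀ hg : g ∈ G, ∑ i, c i • g i = 0 := by
      intro g hg
      have h0 : (∑ i, c i • (⟨g i, gmem g hg i⟩ : R1 N)) = 0 := by
        rw [← Module.forall_dual_apply_eq_zero_iff ℂ]
        intro φ
        have hv : (fun i => φ ⟨g i, gmem g hg i⟩) ∈ K :=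
          Submodule.subset_span ⟨g, hg, φ, rfl⟩
        have h1 := hψ2' _ hv
        rw [hψval] at h1
        simp only [map_sum, map_smul, smul_eq_mul]
        rw [← h1]
        exact Finset.sum_congr rfl fun i _ => mul_comm _ _
      have h2 := congrArg (Submodule.subtype (R1 N)) h0
      simpa using h2
    set L : (Fin m → MvPolynomial (Fin (N + 1)) ℂ) →ₗ[MvPolynomial (Fin (N + 1)) ℂ]
        MvPolynomial (Fin (N + 1)) ℂ :=
      { toFun := fun f => ∑ i, MvPolynomial.C (c i) * f i
        map_add' := by intro a b; simp [mul_add, Finset.sum_add_distrib]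
        map_smul' := by
          intro r a
          simp only [Pi.smul_apply, smul_eq_mul, RingHom.id_apply, Finset.mul_sum]
          exact Finset.sum_congr rfl fun i _ => by ring } with hL
    have hLG : ∀ f ∈ Submodule.span (MvPolynomial (Fin (N + 1)) ℂ) G, L f = 0 := by
      intro f hf
      have hle : Submodule.span (MvPolynomial (Fin (N + 1)) ℂ) G ≤ LinearMap.ker L := by
        rw [Submodule.span_le]
        intro g hg
        have h3 := hcg g hg
        simp only [SetLike.mem_coe, LinearMap.mem_ker, hL, LinearMap.coe_mk, AddHom.coe_mk]
        simpa [smul_eq_C_mul] using h3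
      exact hle hf
    obtain ⟨k, hk⟩ : ∃ k : Fin m, k ≠ j := by
      rcases Decidable.eq_or_ne j ⟨0, by omega⟩ with h | h
      · exact ⟨⟨1, by omega⟩, by rw [h]; simp [Fin.ext_iff]⟩
      · exact ⟨⟨0, by omega⟩, fun hh => h hh.symm⟩
    set f : Fin m → MvPolynomial (Fin (N + 1)) ℂ :=
      Pi.single j (Q k) - Pi.single k (Q j) with hf
    have hfsyz : ∑ i, f i * Q i = 0 := by
      simp only [hf, Pi.sub_apply, sub_mul, Finset.sum_sub_distrib,
        aux_sum_single_mul]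
      ring
    have hLf : L f = 0 := hLG f (hGgen f hfsyz)
    have hLf' : MvPolynomial.C (c j) * Q k - MvPolynomial.C (c k) * Q j = 0 := by
      rw [hL] at hLf
      simp only [LinearMap.coe_mk, AddHom.coe_mk, hf, Pi.sub_apply, mul_sub,
        Finset.sum_sub_distrib, aux_sum_mul_single] at hLf
      exact hLf
    have hcj : c j = 0 := by
      have hd : ∑ i, ((Pi.single k (c j) - Pi.single j (c k)) : Fin m → ℂ) i • Q i = 0 := by
        simp only [Pi.sub_apply, sub_smul, Finset.sum_sub_distrib, aux_sum_single_smul]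
        rw [sub_eq_zero, smul_eq_C_mul, smul_eq_C_mul]
        linear_combination sub_eq_zero.mp hLf'
      have h4 := (Fintype.linearIndependent_iff.mp hQli) _ hd k
      simpa [Pi.single_apply, hk] using h4
    apply hψ1
    rw [hψval, aux_sum_single_mul, one_mul, hcj]
  have h5 := hKS hsingle
  simp only [Submodule.mem_comap] at h5
  have hΦj : Φ (Pi.single j 1) = Q j := by
    rw [hΦ]
    simp only [LinearMap.coe_mk, AddHom.coe_mk, aux_sum_single_smul, one_smul]
  rwa [hΦj] at h5

end
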